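/- Let N_b ≥ 3, δ = 1/N_b, let V_1,…,V_{N_b} be real numbers, and let h be the N_b×N_b real symmetric matrix with h_{ii} = δ^{−2} + V_i, h_{i,i+1} = h_{i,i−1} = −1/(2δ²) (indices taken cyclically modulo N_b), and all other entries zero. For α ≥ 0 define E_α(P) = Tr(hP) + (α/2)δ^{−1} Σ_{i=1}^{N_b} P_{ii}². Then the minimization of E_α over 𝓜₁ = {P symmetric : P² = P, Tr(P) = 1} has a unique minimizer P*. Moreover P* = φ*φ*ᵀ for a unit vector φ* ∈ ℝ^{N_b} with all entries strictly positive, and P* satisfies the strong Aufbau principle: the lowest eigenvalue of the mean-field matrix H* = ∇E_α(P*) (the matrix with entries (H*)_{ij} = h_{ij} + δ_{ij}·αδ^{−1}(P*)_{ii}) is simple and φ* is an associated eigenvector. -/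

import Mathlib

open Matrix
open scoped BigOperators

attribute [local instance] Matrix.normedAddCommGroup Matrix.normedSpace

set_option linter.unusedSectionVars false

namespace GPaux
variable {n : Type*} [Fintype n] [DecidableEq n]

lemma diag_sum_sq {P : Matrix n n ℝ} (hsym : ∀ i j, P i j = P j i)
    (hi : P * P = P) (i : n) : P i i = ∑ k, (P i k)^2 := by
  have h := congrFun (congrFun hi i) i
  rw [Matrix.mul_apply] at h
  rw [← h]
  refine Finset.sum_congr rfl fun k _ => ?_
  rw [sq, hsym k i]

lemma rank_one_of_proj (P : Matrix n n ℝ) (hs : P.IsSymm) (hi : P * P = P)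
    (ht : P.trace = 1) : ∃ φ : n → ℝ, φ ⬝ᵥ φ = 1 ∧ P = vecMulVec φ φ := by
  have hsym : ∀ i j, P i j = P j i := fun i j => by
    have := congrFun (congrFun hs j) i
    simpa using this
  have htr : ∑ i, P i i = 1 := by simpa [Matrix.trace, Matrix.diag] using ht
  -- find j with P j j ≠ 0
  have hex : ∃ j, P j j ≠ 0 := by
    by_contra hc
    push_neg at hc
    rw [Finset.sum_eq_zero (fun i _ => hc i)] at htr
    exact one_ne_zero htr.symm
  obtain ⟨j, hj⟩ := hex
  set d : ℝ := P j j with hd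
  have hdpos : 0 < d := by
    have h1 : d = ∑ k, (P j k)^2 := diag_sum_sq hsym hi j
    have h2 : 0 ≤ d := h1 ▸ Finset.sum_nonneg fun k _ => sq_nonneg _
    exact lt_of_le_of_ne h2 (Ne.symm hj)
  set u : n → ℝ := fun i => P i j with hu
  have hPu : ∀ i, ∑ k, P i k * u k = u i := by
    intro i
    have h := congrFun (congrFun hi i) j
    rw [Matrix.mul_apply] at h
    exact h
  have hsumu : ∑ k, u k * u k = d := by
    have h1 : d = ∑ k, (P j k)^2 := diag_sum_sq hsym hi j
    rw [h1]
    refine Finset.sum_congr rfl fun k _ => ?_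
    simp [hu, sq, hsym k j]
  set c : ℝ := (Real.sqrt d)⁻¹ with hc
  have hc2 : c^2 = d⁻¹ := by
    rw [hc, ← Real.sqrt_inv, Real.sq_sqrt (inv_nonneg.mpr hdpos.le)]
  set φ : n → ℝ := fun i => c * u i with hφ
  have hφφ : φ ⬝ᵥ φ = 1 := by
    have : φ ⬝ᵥ φ = c^2 * ∑ k, u k * u k := by
      simp only [dotProduct, hφ, sq]
      rw [Finset.mul_sum]
      exact Finset.sum_congr rfl fun k _ => by ring
    rw [this, hsumu, hc2, inv_mul_cancel₀ hdpos.ne']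
  have hPφ : ∀ i, ∑ k, P i k * φ k = φ i := by
    intro i
    simp only [hφ]
    rw [show (∑ k, P i k * (c * u k)) = c * ∑ k, P i k * u k by
      rw [Finset.mul_sum]; exact Finset.sum_congr rfl fun k _ => by ring]
    rw [hPu]
  have hφP : ∀ i, ∑ k, φ k * P k i = φ i := by
    intro i
    rw [show (∑ k, φ k * P k i) = ∑ k, P i k * φ k from
      Finset.sum_congr rfl fun k _ => by rw [hsym k i]; ring]
    exact hPφ i
  refine ⟨φ, hφφ, ?_⟩
  set Q : Matrix n n ℝ := P - vecMulVec φ φ with hQ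
  have hQapp : ∀ i k, Q i k = P i k - φ i * φ k := fun i k => by
    simp [hQ, Matrix.sub_apply, vecMulVec_apply]
  have hQsym : ∀ i k, Q i k = Q k i := fun i k => by
    rw [hQapp, hQapp, hsym i k]; ring
  have hφdot : ∑ k, φ k * φ k = 1 := hφφ
  have hQidem : ∀ i k, (∑ l, Q i l * Q l k) = Q i k := by
    intro i k
    have expand : ∀ l, Q i l * Q l k =
        P i l * P l k - (P i l * φ l) * φ k - φ i * (φ l * P l k)
          + φ i * ((φ l * φ l) * φ k) := by
      intro l; rw [hQapp, hQapp]; ring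
    rw [Finset.sum_congr rfl fun l _ => expand l]
    rw [Finset.sum_add_distrib, Finset.sum_sub_distrib, Finset.sum_sub_distrib]
    have e1 : ∑ l, P i l * P l k = P i k := by
      have h := congrFun (congrFun hi i) k
      rwa [Matrix.mul_apply] at h
    have e2 : ∑ l, (P i l * φ l) * φ k = φ i * φ k := by
      rw [← Finset.sum_mul, hPφ]
    have e3 : ∑ l, φ i * (φ l * P l k) = φ i * φ k := by
      rw [← Finset.mul_sum, hφP]
    have e4 : ∑ l, φ i * ((φ l * φ l) * φ k) = φ i * φ k := by
      rw [show (∑ l, φ i * ((φ l * φ l) * φ k)) = φ i * (∑ l, φ l * φ l) * φ k by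
        rw [Finset.mul_sum, Finset.sum_mul]
        exact Finset.sum_congr rfl fun l _ => by ring]
      rw [hφdot]; ring
    rw [e1, e2, e3, e4, hQapp]; ring
  have hQdiag : ∀ i, Q i i = ∑ k, (Q i k)^2 := by
    intro i
    rw [← hQidem i i]
    exact Finset.sum_congr rfl fun k _ => by rw [sq, hQsym k i]
  have hQtr : ∑ i, Q i i = 0 := by
    have : ∑ i, Q i i = (∑ i, P i i) - ∑ i, φ i * φ i := by
      rw [← Finset.sum_sub_distrib]
      exact Finset.sum_congr rfl fun i _ => hQapp i i
    rw [this, htr, hφdot, sub_self]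
  have hQdiag0 : ∀ i, Q i i = 0 := by
    have h := (Finset.sum_eq_zero_iff_of_nonneg
      (fun i _ => (hQdiag i) ▸ Finset.sum_nonneg fun k _ => sq_nonneg _)).mp hQtr
    exact fun i => h i (Finset.mem_univ i)
  have hQ0 : ∀ i k, Q i k = 0 := by
    intro i k
    have h0 : ∑ k, (Q i k)^2 = 0 := (hQdiag i).symm.trans (hQdiag0 i)
    have := (Finset.sum_eq_zero_iff_of_nonneg (fun k _ => sq_nonneg (Q i k))).mp h0
    exact pow_eq_zero_iff (two_ne_zero) |>.mp (this k (Finset.mem_univ k))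
  have : Q = 0 := by ext i k; exact hQ0 i k
  have := sub_eq_zero.mp this
  exact this


lemma qf_expand (A : Matrix n n ℝ) (x y : n → ℝ) :
    x ⬝ᵥ A *ᵥ y = ∑ i, ∑ j, x i * A i j * y j := by
  simp only [dotProduct, mulVec, dotProduct, Finset.mul_sum]
  exact Finset.sum_congr rfl fun i _ => Finset.sum_congr rfl fun j _ => by ring

lemma qf_symm {A : Matrix n n ℝ} (hA : ∀ i j, A i j = A j i) (x y : n → ℝ) :
    x ⬝ᵥ A *ᵥ y = y ⬝ᵥ A *ᵥ x := by
  rw [qf_expand, qf_expand, Finset.sum_comm]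
  exact Finset.sum_congr rfl fun j _ => Finset.sum_congr rfl fun i _ => by
    rw [hA i j]; ring

lemma dot_self_nonneg (x : n → ℝ) : 0 ≤ x ⬝ᵥ x :=
  Finset.sum_nonneg fun i _ => mul_self_nonneg _

lemma dot_self_pos {x : n → ℝ} (hx : x ≠ 0) : 0 < x ⬝ᵥ x := by
  rcases (lt_or_eq_of_le (dot_self_nonneg x)) with h | h
  · exact h
  · exfalso; apply hx
    funext i
    have h0 := (Finset.sum_eq_zero_iff_of_nonneg
      (fun i (_ : i ∈ Finset.univ) => mul_self_nonneg (x i))).mp h.symm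
    have := h0 i (Finset.mem_univ i)
    simpa [mul_self_eq_zero] using this

/-- the unit sphere for the dot product -/
def US (n : Type*) [Fintype n] : Set (n → ℝ) := {x | x ⬝ᵥ x = 1}

lemma US_compact : IsCompact (US n) := by
  apply Metric.isCompact_of_isClosed_isBounded
  · have : Continuous fun x : n → ℝ => x ⬝ᵥ x := by
      unfold dotProduct
      exact continuous_finset_sum _ fun i _ => (continuous_apply i).mul (continuous_apply i)
    exact isClosed_eq this continuous_const
  · rw [Metric.isBounded_iff_subset_closedBall 0]
    refine ⟨1, fun x hx => ?_⟩
    simp only [Metric.mem_closedBall, dist_zero_right]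
    rw [pi_norm_le_iff_of_nonneg (by norm_num)]
    intro i
    rw [Real.norm_eq_abs, abs_le]
    have h1 : x i * x i ≤ 1 := by
      have : x i * x i ≤ x ⬝ᵥ x :=
        Finset.single_le_sum (f := fun j => x j * x j)
          (fun j _ => mul_self_nonneg _) (Finset.mem_univ i)
      rw [hx] at this; exact this
    constructor <;> nlinarith

lemma US_nonempty [Nonempty n] : (US n).Nonempty := by
  obtain ⟨i0⟩ := ‹Nonempty n›
  refine ⟨fun i => if i = i0 then 1 else 0, ?_⟩
  simp only [US, Set.mem_setOf_eq, dotProduct]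
  rw [Finset.sum_eq_single i0]
  · simp
  · intro b _ hb; simp [hb]
  · simp

lemma exists_min_on_US [Nonempty n] {F : (n → ℝ) → ℝ} (hF : Continuous F) :
    ∃ x ∈ US n, ∀ y ∈ US n, F x ≤ F y := by
  obtain ⟨x, hx, hmin⟩ := US_compact.exists_isMinOn US_nonempty hF.continuousOn
  exact ⟨x, hx, fun y hy => hmin hy⟩

lemma qf_continuous (A : Matrix n n ℝ) : Continuous fun x : n → ℝ => x ⬝ᵥ A *ᵥ x := by
  have : (fun x : n → ℝ => x ⬝ᵥ A *ᵥ x) = fun x => ∑ i, ∑ j, x i * A i j * x j := by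
    funext x; exact qf_expand A x x
  rw [this]
  exact continuous_finset_sum _ fun i _ => continuous_finset_sum _ fun j _ =>
    ((continuous_apply i).mul continuous_const).mul (continuous_apply j)

/-- If a symmetric PSD form vanishes at x, then Bx = 0. -/
lemma psd_null {B : Matrix n n ℝ} (hB : ∀ i j, B i j = B j i)
    (hpsd : ∀ y : n → ℝ, 0 ≤ y ⬝ᵥ B *ᵥ y) {x : n → ℝ} (hx : x ⬝ᵥ B *ᵥ x = 0) :
    B *ᵥ x = 0 := by
  funext i
  set y : n → ℝ := fun k => if k = i then 1 else 0 with hy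
  have hyBx : y ⬝ᵥ B *ᵥ x = (B *ᵥ x) i := by
    simp only [dotProduct, hy]
    rw [Finset.sum_eq_single i]
    · simp
    · intro b _ hb; simp [hb]
    · simp
  set r : ℝ := (B *ᵥ x) i with hr
  set s : ℝ := y ⬝ᵥ B *ᵥ y with hs
  have hkey : ∀ t : ℝ, 0 ≤ s * t^2 + 2 * r * t := by
    intro t
    have h := hpsd (x + t • y)
    have hexp : (x + t • y) ⬝ᵥ B *ᵥ (x + t • y)
        = x ⬝ᵥ B *ᵥ x + t * (y ⬝ᵥ B *ᵥ x) + t * (x ⬝ᵥ B *ᵥ y) + t^2 * s := by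
      rw [mulVec_add, mulVec_smul]
      simp only [dotProduct_add, add_dotProduct, dotProduct_smul, smul_dotProduct,
        smul_eq_mul, hs]
      ring
    rw [hexp, qf_symm hB x y, hyBx] at h
    calc (0:ℝ) ≤ x ⬝ᵥ B *ᵥ x + t * r + t * r + t^2 * s := h
    _ = s * t^2 + 2*r*t := by rw [hx]; ring
  have hs0 : 0 ≤ s := hpsd y
  have : r = 0 := by
    by_contra hr0
    rcases eq_or_lt_of_le hs0 with hseq | hspos
    · have h1 := hkey 1
      have h2 := hkey (-1)
      rw [← hseq] at h1 h2
      simp at h1 h2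
      exact hr0 (le_antisymm (by linarith) h1)
    · have h := hkey (-r / s)
      have : s * (-r/s)^2 + 2*r*(-r/s) = -(r^2)/s := by field_simp; ring
      rw [this] at h
      have h2 : (-(r^2)/s) * s = -(r^2) := by field_simp
      have h3 := mul_nonneg h hspos.le
      rw [h2] at h3
      have h4 : r^2 = 0 := le_antisymm (by linarith) (sq_nonneg r)
      exact hr0 (pow_eq_zero_iff two_ne_zero |>.mp h4)
  simpa [hr] using this

lemma qf_smul (A : Matrix n n ℝ) (c : ℝ) (x : n → ℝ) :
    (c • x) ⬝ᵥ A *ᵥ (c • x) = c^2 * (x ⬝ᵥ A *ᵥ x) := by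
  rw [mulVec_smul]
  simp only [dotProduct_smul, smul_dotProduct, smul_eq_mul]
  ring

lemma dot_smul_left (c : ℝ) (x y : n → ℝ) : (c • x) ⬝ᵥ y = c * (x ⬝ᵥ y) := by
  simp [smul_dotProduct]

lemma US_smul_mem {y : n → ℝ} (hy : y ≠ 0) :
    ((Real.sqrt (y ⬝ᵥ y))⁻¹ • y) ∈ US n := by
  have hpos := dot_self_pos hy
  have : ((Real.sqrt (y ⬝ᵥ y))⁻¹ • y) ⬝ᵥ ((Real.sqrt (y ⬝ᵥ y))⁻¹ • y)
      = ((Real.sqrt (y ⬝ᵥ y))⁻¹)^2 * (y ⬝ᵥ y) := by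
    simp only [smul_dotProduct, dotProduct_smul, smul_eq_mul]; ring
  have h2 : ((Real.sqrt (y ⬝ᵥ y))⁻¹)^2 = (y ⬝ᵥ y)⁻¹ := by
    rw [← Real.sqrt_inv, Real.sq_sqrt (inv_nonneg.mpr hpos.le)]
  simp only [US, Set.mem_setOf_eq]
  rw [this, h2, inv_mul_cancel₀ hpos.ne']

lemma rayleigh_lower {A : Matrix n n ℝ} {x : n → ℝ} (hx : x ∈ US n)
    (hmin : ∀ y ∈ US n, x ⬝ᵥ A *ᵥ x ≤ y ⬝ᵥ A *ᵥ y) (y : n → ℝ) :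
    (x ⬝ᵥ A *ᵥ x) * (y ⬝ᵥ y) ≤ y ⬝ᵥ A *ᵥ y := by
  by_cases hy : y = 0
  · simp [hy]
  · have hpos := dot_self_pos hy
    set t : ℝ := (Real.sqrt (y ⬝ᵥ y))⁻¹ with ht
    have ht2 : t^2 = (y ⬝ᵥ y)⁻¹ := by
      rw [ht, ← Real.sqrt_inv, Real.sq_sqrt (inv_nonneg.mpr hpos.le)]
    have hz := US_smul_mem hy
    have h := hmin _ hz
    rw [qf_smul, ht2] at h
    have := mul_le_mul_of_nonneg_right h hpos.le
    rwa [mul_comm ((y ⬝ᵥ y)⁻¹) _, mul_assoc, inv_mul_cancel₀ hpos.ne', mul_one] at this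

lemma rayleigh_eigen {A : Matrix n n ℝ} (hA : ∀ i j, A i j = A j i) {x : n → ℝ}
    (hx : x ∈ US n) (hmin : ∀ y ∈ US n, x ⬝ᵥ A *ᵥ x ≤ y ⬝ᵥ A *ᵥ y) :
    A *ᵥ x = (x ⬝ᵥ A *ᵥ x) • x := by
  set m : ℝ := x ⬝ᵥ A *ᵥ x with hm
  set B : Matrix n n ℝ := A - m • (1 : Matrix n n ℝ) with hB
  have hBapp : ∀ i j, B i j = A i j - m * (if i = j then 1 else 0) := by
    intro i j
    simp [hB, Matrix.sub_apply, Matrix.smul_apply, Matrix.one_apply]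
  have hBsym : ∀ i j, B i j = B j i := by
    intro i j; rw [hBapp, hBapp, hA i j]
    by_cases h : i = j
    · subst h; rfl
    · simp [h, Ne.symm h]
  have hBmv : ∀ y, B *ᵥ y = A *ᵥ y - m • y := by
    intro y
    rw [hB, Matrix.sub_mulVec, Matrix.smul_mulVec, Matrix.one_mulVec]
  have hBqf : ∀ y, y ⬝ᵥ B *ᵥ y = y ⬝ᵥ A *ᵥ y - m * (y ⬝ᵥ y) := by
    intro y
    rw [hBmv, dotProduct_sub, dotProduct_smul, smul_eq_mul]
  have hpsd : ∀ y, 0 ≤ y ⬝ᵥ B *ᵥ y := by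
    intro y
    rw [hBqf]
    have := rayleigh_lower hx hmin y
    linarith
  have hx0 : x ⬝ᵥ B *ᵥ x = 0 := by
    rw [hBqf, hx]  -- hx : x ⬝ᵥ x = 1
    simp [hm]
  have := psd_null hBsym hpsd hx0
  rw [hBmv] at this
  have := sub_eq_zero.mp this
  rw [this, hm]

lemma abs_term_le {A : Matrix n n ℝ} (hoff : ∀ i j, i ≠ j → A i j ≤ 0)
    (x : n → ℝ) (i j : n) :
    |x i| * A i j * |x j| ≤ x i * A i j * x j := by
  by_cases h : i = j
  · subst h
    rw [show |x i| * A i i * |x i| = A i i * (|x i| * |x i|) by ring, abs_mul_abs_self]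
    ring_nf; exact le_refl _
  · have h1 : x i * x j ≤ |x i| * |x j| := by
      rw [← abs_mul]; exact le_abs_self _
    have h2 := mul_le_mul_of_nonpos_left h1 (hoff i j h)
    calc |x i| * A i j * |x j| = A i j * (|x i| * |x j|) := by ring
    _ ≤ A i j * (x i * x j) := h2
    _ = x i * A i j * x j := by ring

lemma abs_qf_le {A : Matrix n n ℝ} (hoff : ∀ i j, i ≠ j → A i j ≤ 0) (x : n → ℝ) :
    (fun i => |x i|) ⬝ᵥ A *ᵥ (fun i => |x i|) ≤ x ⬝ᵥ A *ᵥ x := by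
  rw [qf_expand, qf_expand]
  exact Finset.sum_le_sum fun i _ => Finset.sum_le_sum fun j _ => abs_term_le hoff x i j

lemma abs_qf_eq_terms {A : Matrix n n ℝ} (hoff : ∀ i j, i ≠ j → A i j ≤ 0) (x : n → ℝ)
    (heq : (fun i => |x i|) ⬝ᵥ A *ᵥ (fun i => |x i|) = x ⬝ᵥ A *ᵥ x) :
    ∀ i j, |x i| * A i j * |x j| = x i * A i j * x j := by
  have hsum : (∑ p ∈ Finset.univ ×ˢ Finset.univ, |x p.1| * A p.1 p.2 * |x p.2|)
      = ∑ p ∈ Finset.univ ×ˢ Finset.univ, x p.1 * A p.1 p.2 * x p.2 := by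
    rw [Finset.sum_product' (f := fun i j => |x i| * A i j * |x j|),
      Finset.sum_product' (f := fun i j => x i * A i j * x j)]
    rw [← qf_expand, ← qf_expand]
    exact heq
  have h := (Finset.sum_eq_sum_iff_of_le
    (fun p (_ : p ∈ Finset.univ ×ˢ Finset.univ) => abs_term_le hoff x p.1 p.2)).mp hsum
  intro i j
  exact h (i, j) (by simp)

lemma quartic_EL {A : Matrix n n ℝ} (hA : ∀ i j, A i j = A j i) (K : ℝ) {φ : n → ℝ}
    (hφ : φ ⬝ᵥ φ = 1)
    (hmin : ∀ y ∈ US n, (φ ⬝ᵥ A *ᵥ φ + K * ∑ i, (φ i)^4)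
      ≤ (y ⬝ᵥ A *ᵥ y + K * ∑ i, (y i)^4)) :
    (A *ᵥ φ) + (2*K) • (fun i => (φ i)^3)
      = (φ ⬝ᵥ ((A *ᵥ φ) + (2*K) • (fun i => (φ i)^3))) • φ := by
  set g : n → ℝ := (A *ᵥ φ) + (2*K) • (fun i => (φ i)^3) with hg
  have key : ∀ w : n → ℝ, w ⬝ᵥ φ = 0 → w ⬝ᵥ g = 0 := by
    intro w hw
    have hφw : φ ⬝ᵥ w = 0 := by rw [dotProduct_comm]; exact hw
    set m : ℝ := w ⬝ᵥ w with hm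
    have hm0 : 0 ≤ m := dot_self_nonneg w
    set s : ℝ → ℝ := fun t => 1 + t^2 * m with hs
    have hspos : ∀ t, 0 < s t := fun t => by
      have : 0 ≤ t^2 * m := mul_nonneg (sq_nonneg t) hm0
      simp only [hs]; linarith
    set Q : ℝ → ℝ := fun t => (φ + t • w) ⬝ᵥ A *ᵥ (φ + t • w) with hQ
    set R : ℝ → ℝ := fun t => ∑ i, (φ i + t * w i)^4 with hR
    set G : ℝ → ℝ := fun t => Q t / s t + K * R t / (s t)^2 with hG
    have hnorm : ∀ t : ℝ, (φ + t • w) ⬝ᵥ (φ + t • w) = s t := by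
      intro t
      simp only [dotProduct_add, add_dotProduct, dotProduct_smul, smul_dotProduct,
        smul_eq_mul, hφ, hw, hφw, hs]
      ring
    have hs0 : s 0 = 1 := by simp [hs]
    have hQ0 : Q 0 = φ ⬝ᵥ A *ᵥ φ := by simp [hQ]
    have hR0 : R 0 = ∑ i, (φ i)^4 := by simp [hR]
    have hG0 : G 0 = φ ⬝ᵥ A *ᵥ φ + K * ∑ i, (φ i)^4 := by
      simp only [hG, hs0, hQ0, hR0]
      ring
    have hGt : ∀ t : ℝ, G 0 ≤ G t := by
      intro t
      set c : ℝ := (Real.sqrt (s t))⁻¹ with hc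
      have hc2 : c^2 = (s t)⁻¹ := by
        rw [hc, ← Real.sqrt_inv, Real.sq_sqrt (inv_nonneg.mpr (hspos t).le)]
      set ψ : n → ℝ := c • (φ + t • w) with hψ
      have hψUS : ψ ∈ US n := by
        simp only [US, Set.mem_setOf_eq, hψ]
        rw [show (c • (φ + t • w)) ⬝ᵥ (c • (φ + t • w))
            = c^2 * ((φ + t • w) ⬝ᵥ (φ + t • w)) by
          simp only [smul_dotProduct, dotProduct_smul, smul_eq_mul]; ring]
        rw [hnorm, hc2, inv_mul_cancel₀ (hspos t).ne']
      have hval : ψ ⬝ᵥ A *ᵥ ψ + K * ∑ i, (ψ i)^4 = G t := by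
        have h1 : ψ ⬝ᵥ A *ᵥ ψ = (s t)⁻¹ * Q t := by
          rw [hψ, qf_smul, hc2, hQ]
        have h2 : ∑ i, (ψ i)^4 = ((s t)^2)⁻¹ * R t := by
          have : ∀ i, (ψ i)^4 = ((s t)^2)⁻¹ * (φ i + t * w i)^4 := by
            intro i
            have : ψ i = c * (φ i + t * w i) := by
              simp only [hψ, Pi.smul_apply, Pi.add_apply, smul_eq_mul]
            rw [this, mul_pow, show (c:ℝ)^4 = (c^2)^2 by ring, hc2, ← inv_pow]
          rw [Finset.sum_congr rfl fun i _ => this i, ← Finset.mul_sum, hR]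
        rw [h1, h2, hG]
        field_simp
      have := hmin ψ hψUS
      rw [hval] at this
      rw [hG0]
      exact this
    have hlocmin : IsLocalMin G 0 := Filter.Eventually.of_forall hGt
    -- derivative of G at 0
    set q1 : ℝ := 2 * (w ⬝ᵥ A *ᵥ φ) with hq1
    set r1 : ℝ := ∑ i, 4 * (φ i)^3 * w i with hr1
    have hQpoly : Q = fun t => (φ ⬝ᵥ A *ᵥ φ) + t * q1 + t^2 * (w ⬝ᵥ A *ᵥ w) := by
      funext t
      simp only [hQ, mulVec_add, mulVec_smul, dotProduct_add, add_dotProduct,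
        dotProduct_smul, smul_dotProduct, smul_eq_mul, hq1]
      rw [qf_symm hA φ w]
      ring
    have hQder : HasDerivAt Q q1 0 := by
      rw [hQpoly]
      have h1 : HasDerivAt (fun t : ℝ => t * q1) q1 0 := by
        simpa using (hasDerivAt_id (0:ℝ)).mul_const q1
      have h2 : HasDerivAt (fun t : ℝ => t^2 * (w ⬝ᵥ A *ᵥ w)) 0 0 := by
        have := (hasDerivAt_pow 2 (0:ℝ)).mul_const (w ⬝ᵥ A *ᵥ w)
        simpa using this
      have := ((hasDerivAt_const (0:ℝ) (φ ⬝ᵥ A *ᵥ φ)).fun_add h1).fun_add h2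
      simpa using this
    have hsder : HasDerivAt s 0 0 := by
      have h2 : HasDerivAt (fun t : ℝ => t^2 * m) 0 0 := by
        have := (hasDerivAt_pow 2 (0:ℝ)).mul_const m
        simpa using this
      have := (hasDerivAt_const (0:ℝ) (1:ℝ)).fun_add h2
      simpa [hs] using this
    have hRder : HasDerivAt R r1 0 := by
      have : ∀ i ∈ Finset.univ (α := n), HasDerivAt (fun t : ℝ => (φ i + t * w i)^4)
          (4 * (φ i)^3 * w i) 0 := by
        intro i _
        have hb : HasDerivAt (fun t : ℝ => φ i + t * w i) (w i) 0 := by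
          simpa using (hasDerivAt_const (0:ℝ) (φ i)).fun_add ((hasDerivAt_id (0:ℝ)).mul_const (w i))
        have := hb.fun_pow 4
        norm_num at this
        convert this using 1
      have := HasDerivAt.fun_sum this
      simpa [hR, hr1] using this
    have hGder : HasDerivAt G (q1 + K * r1) 0 := by
      have hd1 : HasDerivAt (fun t => Q t / s t) q1 0 := by
        have := hQder.fun_div hsder (by rw [hs0]; norm_num)
        simpa [hs0] using this
      have hd2 : HasDerivAt (fun t => K * R t / (s t)^2) (K * r1) 0 := by
        have hnum : HasDerivAt (fun t => K * R t) (K * r1) 0 := hRder.const_mul K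
        have hden : HasDerivAt (fun t => (s t)^2) 0 0 := by
          have := hsder.fun_pow 2
          simpa using this
        have := hnum.fun_div hden (by rw [hs0]; norm_num)
        simpa [hs0] using this
      exact hd1.add hd2
    have hzero : q1 + K * r1 = 0 := hlocmin.hasDerivAt_eq_zero hGder
    have : w ⬝ᵥ g = (q1 + K * r1) / 2 := by
      have h4 : (∑ i, 4 * (φ i)^3 * w i) = 4 * ∑ i, w i * (φ i)^3 := by
        rw [Finset.mul_sum]; exact Finset.sum_congr rfl fun i _ => by ring
      have h3 : w ⬝ᵥ (fun i => (φ i)^3) = ∑ i, w i * (φ i)^3 := rfl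
      simp only [hg, dotProduct_add, dotProduct_smul, smul_eq_mul, hq1, hr1, h4, h3]
      ring
    rw [this, hzero]
    norm_num
  -- orthogonal decomposition
  set lam : ℝ := φ ⬝ᵥ g with hlam
  set w : n → ℝ := g - lam • φ with hwdef
  have hwφ : w ⬝ᵥ φ = 0 := by
    simp only [hwdef, sub_dotProduct, smul_dotProduct, smul_eq_mul, hφ]
    rw [dotProduct_comm]
    simp [hlam]
  have hwg := key w hwφ
  have hww : w ⬝ᵥ w = 0 := by
    have : w ⬝ᵥ g = w ⬝ᵥ w + lam * (w ⬝ᵥ φ) := by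
      have : g = w + lam • φ := by rw [hwdef]; abel
      rw [this]
      simp [dotProduct_add, dotProduct_smul]
    rw [hwg] at this
    rw [hwφ] at this
    linarith
  have hw0 : w = 0 := by
    by_contra hc
    exact (dot_self_pos hc).ne' hww
  have := sub_eq_zero.mp (hwdef ▸ hw0)
  rw [this]

lemma trace_mul_vecMulVec (A : Matrix n n ℝ) (φ : n → ℝ) :
    (A * vecMulVec φ φ).trace = φ ⬝ᵥ A *ᵥ φ := by
  rw [qf_expand]
  simp only [Matrix.trace, Matrix.diag, Matrix.mul_apply, vecMulVec_apply]
  exact Finset.sum_congr rfl fun i _ => Finset.sum_congr rfl fun k _ => by ring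

lemma vecMulVec_mem_M1 {φ : n → ℝ} (hφ : φ ⬝ᵥ φ = 1) :
    (vecMulVec φ φ).IsSymm ∧ vecMulVec φ φ * vecMulVec φ φ = vecMulVec φ φ ∧
      (vecMulVec φ φ).trace = 1 := by
  refine ⟨?_, ?_, ?_⟩
  · ext i j
    simp only [Matrix.transpose_apply, vecMulVec_apply]
    ring
  · ext i j
    simp only [Matrix.mul_apply, vecMulVec_apply]
    rw [show (∑ k, (φ i * φ k) * (φ k * φ j)) = (φ i * φ j) * ∑ k, φ k * φ k from by
      rw [Finset.mul_sum]; exact Finset.sum_congr rfl fun k _ => by ring]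
    rw [show (∑ k, φ k * φ k) = (1:ℝ) from hφ, mul_one]
  · simp only [Matrix.trace, Matrix.diag, vecMulVec_apply]
    exact hφ

end GPaux

namespace GPconc
open GPaux Matrix

noncomputable def hmat (Nb : ℕ) (V : Fin Nb → ℝ) (δ : ℝ) : Matrix (Fin Nb) (Fin Nb) ℝ :=
  Matrix.of fun i j =>
    if i = j then 1 / δ ^ 2 + V i
    else if (i.val + 1) % Nb = j.val ∨ (j.val + 1) % Nb = i.val then -(1 / (2 * δ ^ 2))
    else 0

lemma hmat_symm (Nb : ℕ) (V : Fin Nb → ℝ) (δ : ℝ) :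
    ∀ i j, hmat Nb V δ i j = hmat Nb V δ j i := by
  intro i j
  simp only [hmat, Matrix.of_apply]
  by_cases h : i = j
  · subst h; simp
  · rw [if_neg h, if_neg (Ne.symm h)]
    by_cases h2 : (i.val + 1) % Nb = j.val ∨ (j.val + 1) % Nb = i.val
    · rw [if_pos h2, if_pos (Or.symm h2)]
    · rw [if_neg h2, if_neg (fun hc => h2 (Or.symm hc))]

lemma hmat_offdiag_nonpos (Nb : ℕ) (V : Fin Nb → ℝ) {δ : ℝ} (hδ : 0 < δ) :
    ∀ i j, i ≠ j → hmat Nb V δ i j ≤ 0 := by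
  intro i j hij
  simp only [hmat, Matrix.of_apply, if_neg hij]
  by_cases h : (i.val + 1) % Nb = j.val ∨ (j.val + 1) % Nb = i.val
  · rw [if_pos h]
    have : 0 < δ^2 := by positivity
    have : 0 < 1 / (2 * δ^2) := by positivity
    linarith
  · rw [if_neg h]

def idx (Nb : ℕ) (hNb : 0 < Nb) (m : ℕ) : Fin Nb := ⟨m % Nb, Nat.mod_lt m hNb⟩

lemma idx_val (Nb : ℕ) (hNb : 0 < Nb) (m : ℕ) : (idx Nb hNb m).val = m % Nb := rfl

lemma idx_self (Nb : ℕ) (hNb : 0 < Nb) (i : Fin Nb) : idx Nb hNb i.val = i := by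
  apply Fin.ext
  exact Nat.mod_eq_of_lt i.isLt

lemma idx_succ_val (Nb : ℕ) (hNb : 0 < Nb) (m : ℕ) :
    ((idx Nb hNb m).val + 1) % Nb = (idx Nb hNb (m + 1)).val := by
  rw [idx_val, idx_val, Nat.mod_add_mod]

lemma idx_succ_ne {Nb : ℕ} (hNb : 3 ≤ Nb) (hpos : 0 < Nb) (m : ℕ) :
    idx Nb hpos (m + 1) ≠ idx Nb hpos m := by
  intro hc
  have hval := congrArg Fin.val hc
  rw [idx_val, idx_val] at hval
  set a := m % Nb with ha
  have halt : a < Nb := Nat.mod_lt m hpos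
  have h1 : (m + 1) % Nb = (a + 1) % Nb := by
    rw [ha, Nat.mod_add_mod]
  rw [h1] at hval
  by_cases hlt : a + 1 < Nb
  · rw [Nat.mod_eq_of_lt hlt] at hval; omega
  · have he : a + 1 = Nb := by omega
    rw [he, Nat.mod_self] at hval
    omega

lemma hmat_succ {Nb : ℕ} (hNb : 3 ≤ Nb) (hpos : 0 < Nb) (V : Fin Nb → ℝ) (δ : ℝ) (m : ℕ) :
    hmat Nb V δ (idx Nb hpos m) (idx Nb hpos (m + 1)) = -(1 / (2 * δ^2)) := by
  simp only [hmat, Matrix.of_apply]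
  rw [if_neg (Ne.symm (idx_succ_ne hNb hpos m))]
  rw [if_pos (Or.inl (idx_succ_val Nb hpos m))]

/-- a nonnegative eigenvector of `hmat + diagonal d` with a zero entry is zero -/
lemma eig_nonneg_zero {Nb : ℕ} (hNb : 3 ≤ Nb) (V : Fin Nb → ℝ) {δ : ℝ} (hδ : 0 < δ)
    (d : Fin Nb → ℝ) {x : Fin Nb → ℝ} (hx : ∀ i, 0 ≤ x i) {lam : ℝ}
    (heig : (hmat Nb V δ + Matrix.diagonal d) *ᵥ x = lam • x)
    {i0 : Fin Nb} (h0 : x i0 = 0) : x = 0 := by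
  have hpos : 0 < Nb := by omega
  set H : Matrix (Fin Nb) (Fin Nb) ℝ := hmat Nb V δ + Matrix.diagonal d with hH
  have hcpos : 0 < 1 / (2 * δ^2) := by positivity
  have step : ∀ j : Fin Nb, x j = 0 → x (idx Nb hpos (j.val + 1)) = 0 := by
    intro j hj
    have hrow : ∑ l, H j l * x l = lam * x j := by
      have := congrFun heig j
      simpa [Matrix.mulVec, dotProduct] using this
    rw [hj, mul_zero] at hrow
    have hsplit : ∑ l, H j l * x l
        = H j j * x j + ∑ l ∈ Finset.univ.erase j, H j l * x l :=
      (Finset.add_sum_erase _ _ (Finset.mem_univ j)).symm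
    rw [hsplit, hj, mul_zero, zero_add] at hrow
    have hterms : ∀ l ∈ Finset.univ.erase j, H j l * x l ≤ 0 := by
      intro l hl
      have hlj : l ≠ j := Finset.ne_of_mem_erase hl
      have : H j l = hmat Nb V δ j l := by
        rw [hH, Matrix.add_apply, Matrix.diagonal_apply_ne' d hlj, add_zero]
      rw [this]
      exact mul_nonpos_of_nonpos_of_nonneg
        (hmat_offdiag_nonpos Nb V hδ j l (Ne.symm hlj)) (hx l)
    have hall := (Finset.sum_eq_zero_iff_of_nonpos hterms).mp hrow
    set l' : Fin Nb := idx Nb hpos (j.val + 1) with hl'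
    have hl'j : l' ≠ j := by
      have := idx_succ_ne hNb hpos j.val
      rwa [idx_self Nb hpos j] at this
    have hmem : l' ∈ Finset.univ.erase j := Finset.mem_erase.mpr ⟨hl'j, Finset.mem_univ _⟩
    have hterm := hall l' hmem
    have hHjl : H j l' = -(1 / (2 * δ^2)) := by
      rw [hH, Matrix.add_apply, Matrix.diagonal_apply_ne' d hl'j, add_zero]
      have := hmat_succ hNb hpos V δ j.val
      rwa [idx_self Nb hpos j] at this
    rw [hHjl] at hterm
    have : x l' = 0 := by
      by_contra hc
      have h1 : 0 < x l' := lt_of_le_of_ne (hx l') (Ne.symm hc)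
      nlinarith
    exact this
  have allk : ∀ k : ℕ, x (idx Nb hpos (i0.val + k)) = 0 := by
    intro k
    induction k with
    | zero =>
      rw [Nat.add_zero, idx_self Nb hpos i0]
      exact h0
    | succ k ih =>
      have := step _ ih
      have heq : idx Nb hpos ((idx Nb hpos (i0.val + k)).val + 1)
          = idx Nb hpos (i0.val + (k + 1)) := by
        apply Fin.ext
        rw [idx_val, idx_val, idx_val, Nat.mod_add_mod, Nat.add_assoc]
      rw [heq] at this
      exact this
  funext i
  have hk := allk (Nb - i0.val + i.val)
  have : i0.val + (Nb - i0.val + i.val) = Nb + i.val := by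
    have := i0.isLt; omega
  rw [this] at hk
  have : idx Nb hpos (Nb + i.val) = i := by
    apply Fin.ext
    rw [idx_val, Nat.add_mod_left, Nat.mod_eq_of_lt i.isLt]
  rw [this] at hk
  simp [hk]

lemma pos_min_unique {Nb : ℕ} (hNb : 3 ≤ Nb) (V : Fin Nb → ℝ) {δ : ℝ} (hδ : 0 < δ)
    {K : ℝ} (hK : 0 ≤ K) {φ ρ : Fin Nb → ℝ}
    (hφU : φ ⬝ᵥ φ = 1) (hρU : ρ ⬝ᵥ ρ = 1)
    (hφpos : ∀ i, 0 < φ i) (hρpos : ∀ i, 0 < ρ i)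
    (hφmin : ∀ y ∈ US (Fin Nb),
      φ ⬝ᵥ (hmat Nb V δ) *ᵥ φ + K * ∑ i, (φ i)^4
        ≤ y ⬝ᵥ (hmat Nb V δ) *ᵥ y + K * ∑ i, (y i)^4)
    (hρmin : ∀ y ∈ US (Fin Nb),
      ρ ⬝ᵥ (hmat Nb V δ) *ᵥ ρ + K * ∑ i, (ρ i)^4
        ≤ y ⬝ᵥ (hmat Nb V δ) *ᵥ y + K * ∑ i, (y i)^4) :
    ρ = φ := by
  have hpos : 0 < Nb := by omega
  set h : Matrix (Fin Nb) (Fin Nb) ℝ := hmat Nb V δ with hh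
  set a : Fin Nb → ℝ := fun i => ((φ i)^2 + (ρ i)^2)/2 with ha
  have hapos : ∀ i, 0 < a i := fun i => by
    have := hφpos i; have := hρpos i
    simp only [ha]; positivity
  set χ : Fin Nb → ℝ := fun i => Real.sqrt (a i) with hχ
  have hχsq : ∀ i, χ i * χ i = a i := fun i => Real.mul_self_sqrt (hapos i).le
  have haval : ∀ i, a i = (φ i * φ i + ρ i * ρ i)/2 := fun i => by
    show ((φ i)^2 + (ρ i)^2)/2 = _
    ring
  have hχU : χ ⬝ᵥ χ = 1 := by
    simp only [dotProduct]
    rw [Finset.sum_congr rfl fun i (_ : i ∈ Finset.univ) => hχsq i]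
    calc ∑ i, a i = ∑ i, (φ i * φ i + ρ i * ρ i)/2 :=
          Finset.sum_congr rfl fun i _ => haval i
    _ = ((∑ i, φ i * φ i) + ∑ i, ρ i * ρ i)/2 := by
          rw [← Finset.sum_div, Finset.sum_add_distrib]
    _ = 1 := by
          rw [show (∑ i, φ i * φ i) = (1:ℝ) from hφU,
            show (∑ i, ρ i * ρ i) = (1:ℝ) from hρU]
          norm_num
  have hχUS : χ ∈ US (Fin Nb) := hχU
  -- termwise quadratic comparison
  have hquad : ∀ i j : Fin Nb,
      χ i * h i j * χ j ≤ (φ i * h i j * φ j + ρ i * h i j * ρ j)/2 := by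
    intro i j
    by_cases hij : i = j
    · subst hij
      apply le_of_eq
      have h1 : χ i * h i i * χ i = h i i * (χ i * χ i) := by ring
      rw [h1, hχsq i, ha]
      ring
    · have hoff : h i j ≤ 0 := hmat_offdiag_nonpos Nb V hδ i j hij
      have h2 : χ i * χ j = Real.sqrt (a i * a j) := by
        rw [hχ]
        exact (Real.sqrt_mul (hapos i).le _).symm
      have hnum : 0 ≤ (φ i * φ j + ρ i * ρ j)/2 := by
        have := mul_pos (hφpos i) (hφpos j)
        have := mul_pos (hρpos i) (hρpos j)
        linarith
      have h3 : (φ i * φ j + ρ i * ρ j)/2 ≤ Real.sqrt (a i * a j) := by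
        have hsqle : ((φ i * φ j + ρ i * ρ j)/2)^2 ≤ a i * a j := by
          rw [haval i, haval j]
          nlinarith [sq_nonneg (φ i * ρ j - ρ i * φ j)]
        have := Real.sqrt_le_sqrt hsqle
        rwa [Real.sqrt_sq hnum] at this
      have h4 := mul_le_mul_of_nonpos_left h3 hoff
      calc χ i * h i j * χ j = h i j * (χ i * χ j) := by ring
      _ = h i j * Real.sqrt (a i * a j) := by rw [h2]
      _ ≤ h i j * ((φ i * φ j + ρ i * ρ j)/2) := h4
      _ = (φ i * h i j * φ j + ρ i * h i j * ρ j)/2 := by ring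
  -- quartic comparison
  have hquart : ∀ i : Fin Nb, (χ i)^4 ≤ ((φ i)^4 + (ρ i)^4)/2 := by
    intro i
    have h1 : (χ i)^4 = (a i)^2 := by
      rw [show (χ i)^4 = (χ i * χ i)^2 by ring, hχsq i]
    rw [h1, ha]
    nlinarith [sq_nonneg ((φ i)^2 - (ρ i)^2)]
  -- sums
  set QL : ℝ := χ ⬝ᵥ h *ᵥ χ with hQL
  set QR : ℝ := ((φ ⬝ᵥ h *ᵥ φ) + (ρ ⬝ᵥ h *ᵥ ρ))/2 with hQR
  set SL : ℝ := ∑ i, (χ i)^4 with hSL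
  set SR : ℝ := ((∑ i, (φ i)^4) + ∑ i, (ρ i)^4)/2 with hSR
  have hQle : QL ≤ QR := by
    rw [hQL, hQR, qf_expand, qf_expand, qf_expand]
    rw [← Finset.sum_add_distrib, Finset.sum_div]
    refine Finset.sum_le_sum fun i _ => ?_
    rw [← Finset.sum_add_distrib, Finset.sum_div]
    exact Finset.sum_le_sum fun j _ => hquad i j
  have hSle : SL ≤ SR := by
    rw [hSL, hSR, ← Finset.sum_add_distrib, Finset.sum_div]
    exact Finset.sum_le_sum fun i _ => hquart i
  have hmm : φ ⬝ᵥ h *ᵥ φ + K * ∑ i, (φ i)^4 = ρ ⬝ᵥ h *ᵥ ρ + K * ∑ i, (ρ i)^4 :=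
    le_antisymm (hφmin ρ hρU) (hρmin φ hφU)
  have hFχ : φ ⬝ᵥ h *ᵥ φ + K * ∑ i, (φ i)^4 ≤ QL + K * SL := hφmin χ hχUS
  have htot : QL + K * SL ≤ QR + K * SR := by
    have := mul_le_mul_of_nonneg_left hSle hK
    linarith
  have havg : QR + K * SR = φ ⬝ᵥ h *ᵥ φ + K * ∑ i, (φ i)^4 := by
    rw [hQR, hSR]
    linarith [hmm]
  have hQeq : QL = QR := by
    have h1 : QL + K * SL = QR + K * SR := le_antisymm htot (by rw [havg]; exact hFχ)
    have h2 := mul_le_mul_of_nonneg_left hSle hK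
    linarith
  -- extract termwise equality in the quadratic part
  have hterm : ∀ i j : Fin Nb,
      χ i * h i j * χ j = (φ i * h i j * φ j + ρ i * h i j * ρ j)/2 := by
    have hsum : (∑ p ∈ Finset.univ ×ˢ Finset.univ, χ p.1 * h p.1 p.2 * χ p.2)
        = ∑ p ∈ Finset.univ ×ˢ Finset.univ,
            (φ p.1 * h p.1 p.2 * φ p.2 + ρ p.1 * h p.1 p.2 * ρ p.2)/2 := by
      rw [Finset.sum_product' (f := fun i j => χ i * h i j * χ j),
        Finset.sum_product'
          (f := fun i j => (φ i * h i j * φ j + ρ i * h i j * ρ j)/2)]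
      rw [← qf_expand]
      have : ∀ i : Fin Nb, (∑ j, (φ i * h i j * φ j + ρ i * h i j * ρ j)/2)
          = ((∑ j, φ i * h i j * φ j) + ∑ j, ρ i * h i j * ρ j)/2 := fun i => by
        rw [← Finset.sum_add_distrib, ← Finset.sum_div]
      rw [Finset.sum_congr rfl fun i _ => this i]
      rw [show (∑ i, ((∑ j, φ i * h i j * φ j) + ∑ j, ρ i * h i j * ρ j)/2)
          = ((∑ i, ∑ j, φ i * h i j * φ j) + ∑ i, ∑ j, ρ i * h i j * ρ j)/2 from by
        rw [← Finset.sum_add_distrib, ← Finset.sum_div]]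
      rw [← qf_expand, ← qf_expand]
      rw [← hQL]
      rw [hQeq, hQR]
    have hle : ∀ p ∈ Finset.univ ×ˢ Finset.univ (α := Fin Nb),
        χ p.1 * h p.1 p.2 * χ p.2
          ≤ (φ p.1 * h p.1 p.2 * φ p.2 + ρ p.1 * h p.1 p.2 * ρ p.2)/2 :=
      fun p _ => hquad p.1 p.2
    have := (Finset.sum_eq_sum_iff_of_le hle).mp hsum
    intro i j
    exact this (i, j) (by simp)
  -- cross ratios along the cycle
  have hcross : ∀ k : ℕ, φ (idx Nb hpos k) * ρ (idx Nb hpos (k+1))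
      = ρ (idx Nb hpos k) * φ (idx Nb hpos (k+1)) := by
    intro k
    set p : Fin Nb := idx Nb hpos k
    set q : Fin Nb := idx Nb hpos (k+1)
    have hpq : h p q = -(1/(2*δ^2)) := hmat_succ hNb hpos V δ k
    have hc0 : (1:ℝ)/(2*δ^2) > 0 := by positivity
    have ht := hterm p q
    rw [hpq] at ht
    have hmid : χ p * χ q = (φ p * φ q + ρ p * ρ q)/2 := by
      have hl : (1/(2*δ^2)) * (χ p * χ q)
          = (1/(2*δ^2)) * ((φ p * φ q + ρ p * ρ q)/2) := by linear_combination -ht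
      exact mul_left_cancel₀ (by positivity : (1:ℝ)/(2*δ^2) ≠ 0) hl
    have hsq : a p * a q = ((φ p * φ q + ρ p * ρ q)/2)^2 := by
      have h2 : χ p * χ q = Real.sqrt (a p * a q) := by
        rw [hχ]; exact (Real.sqrt_mul (hapos p).le _).symm
      rw [h2] at hmid
      rw [← hmid, Real.sq_sqrt (mul_pos (hapos p) (hapos q)).le]
    have hz : (φ p * ρ q - ρ p * φ q)^2 = 0 := by
      have h1 : (φ p * ρ q - ρ p * φ q)^2 ≤ 0 := by
        rw [haval p, haval q] at hsq
        nlinarith [hsq]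
      exact le_antisymm h1 (sq_nonneg _)
    have := pow_eq_zero_iff (two_ne_zero) |>.mp hz
    linarith [sub_eq_zero.mp this]
  -- propagate proportionality
  set z : Fin Nb := idx Nb hpos 0 with hz
  have hpropk : ∀ k : ℕ, ρ (idx Nb hpos k) * φ z = φ (idx Nb hpos k) * ρ z := by
    intro k
    induction k with
    | zero =>
      show ρ z * φ z = φ z * ρ z
      ring
    | succ k ih =>
      set p : Fin Nb := idx Nb hpos k
      set q : Fin Nb := idx Nb hpos (k+1)
      have hck := hcross k
      have key : φ p * (ρ q * φ z) = φ p * (φ q * ρ z) := by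
        linear_combination φ z * hck + φ q * ih
      exact mul_left_cancel₀ (hφpos p).ne' key
  have hprop : ∀ i : Fin Nb, ρ i * φ z = φ i * ρ z := by
    intro i
    have := hpropk i.val
    rwa [idx_self Nb hpos i] at this
  set t : ℝ := ρ z / φ z with htd
  have htpos : 0 < t := div_pos (hρpos z) (hφpos z)
  have hti : ∀ i, ρ i = t * φ i := by
    intro i
    have hφz : φ z ≠ 0 := (hφpos z).ne'
    rw [htd]
    field_simp
    linear_combination hprop i
  have ht2 : t^2 = 1 := by
    have h1 : ρ ⬝ᵥ ρ = t^2 * (φ ⬝ᵥ φ) := by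
      simp only [dotProduct]
      rw [Finset.mul_sum]
      exact Finset.sum_congr rfl fun i _ => by rw [hti i]; ring
    rw [hρU, hφU, mul_one] at h1
    exact h1.symm
  have ht1 : t = 1 := by
    have : (t - 1) * (t + 1) = 0 := by linear_combination ht2
    rcases mul_eq_zero.mp this with h | h
    · linarith
    · linarith
  funext i
  rw [hti i, ht1, one_mul]

end GPconc


set_option maxHeartbeats 2000000 in
open GPaux GPconc in

/-- the discretized 1D periodic Gross–Pitaevskii model with `N = 1`.
The energy `E_α(P) = Tr(hP) + (α/2)δ⁻¹ Σᵢ Pᵢᵢ²`, where `h` is the periodic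
second-order finite-difference matrix with potential `V`, has a unique minimizer `P*`
over `𝓜₁`; moreover `P* = φ*φ*ᵀ` with `φ*` a positive unit vector, and `P*` satisfies
the strong Aufbau principle: `φ*` is an eigenvector of the mean-field Hamiltonian
`H* = ∇E_α(P*) = h + αδ⁻¹Diag(P*ᵢᵢ)` associated with its lowest eigenvalue, which is
simple. -/
theorem gross_pitaevskii_N1_unique_minimizer_aufbau
    {Nb : ℕ} (hNb : 3 ≤ Nb) (V : Fin Nb → ℝ) (α : ℝ) (hα : 0 ≤ α) :
    let δ : ℝ := 1 / Nb
    let h : Matrix (Fin Nb) (Fin Nb) ℝ := Matrix.of fun i j =>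
      if i = j then 1 / δ ^ 2 + V i
      else if (i.val + 1) % Nb = j.val ∨ (j.val + 1) % Nb = i.val then -(1 / (2 * δ ^ 2))
      else 0
    let Eα : Matrix (Fin Nb) (Fin Nb) ℝ → ℝ := fun P =>
      (h * P).trace + α / 2 * δ⁻¹ * ∑ i, P i i ^ 2
    let M1 : Set (Matrix (Fin Nb) (Fin Nb) ℝ) :=
      {P | P.IsSymm ∧ P * P = P ∧ P.trace = 1}
    ∃ Pstar ∈ M1,
      (∀ Q ∈ M1, Eα Pstar ≤ Eα Q) ∧
      (∀ Q ∈ M1, (∀ Q' ∈ M1, Eα Q ≤ Eα Q') → Q = Pstar) ∧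
      ∃ φ : Fin Nb → ℝ, φ ⬝ᵥ φ = 1 ∧ (∀ i, 0 < φ i) ∧ Pstar = vecMulVec φ φ ∧
        ∃ ε1 : ℝ,
          (h + Matrix.diagonal fun i => α * δ⁻¹ * Pstar i i).mulVec φ = ε1 • φ ∧
          (∀ (μ : ℝ) (v : Fin Nb → ℝ), v ≠ 0 →
            (h + Matrix.diagonal fun i => α * δ⁻¹ * Pstar i i).mulVec v = μ • v → ε1 ≤ μ) ∧
          (∀ v : Fin Nb → ℝ,
            (h + Matrix.diagonal fun i => α * δ⁻¹ * Pstar i i).mulVec v = ε1 • v →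
              ∃ cc : ℝ, v = cc • φ) := by
  intro δ h Eα M1
  have hNb0 : 0 < Nb := by omega
  have hne : Nonempty (Fin Nb) := ⟨⟨0, hNb0⟩⟩
  have hNbR : (0:ℝ) < (Nb:ℝ) := by exact_mod_cast hNb0
  have hδpos : 0 < δ := by
    show (0:ℝ) < 1 / Nb
    positivity
  have hhm : h = hmat Nb V δ := rfl
  set K : ℝ := α / 2 * δ⁻¹ with hKdef
  have hK : 0 ≤ K := by
    have : 0 ≤ δ⁻¹ := inv_nonneg.mpr hδpos.le
    have : 0 ≤ α / 2 := by linarith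
    exact mul_nonneg this (inv_nonneg.mpr hδpos.le)
  have hKval : 2 * K = α * δ⁻¹ := by rw [hKdef]; ring
  set f : (Fin Nb → ℝ) → ℝ := fun x => x ⬝ᵥ h *ᵥ x + K * ∑ i, (x i)^4 with hfdef
  -- energy of rank-one projections
  have hEvv : ∀ ψ : Fin Nb → ℝ, Eα (vecMulVec ψ ψ) = f ψ := by
    intro ψ
    show (h * vecMulVec ψ ψ).trace + α / 2 * δ⁻¹ * ∑ i, (vecMulVec ψ ψ i i)^2 = _
    rw [trace_mul_vecMulVec]
    have h4 : ∑ i, (vecMulVec ψ ψ i i)^2 = ∑ i, (ψ i)^4 :=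
      Finset.sum_congr rfl fun i _ => by rw [vecMulVec_apply]; ring
    rw [h4]
  have hmem : ∀ ψ : Fin Nb → ℝ, ψ ⬝ᵥ ψ = 1 → vecMulVec ψ ψ ∈ M1 :=
    fun ψ hψ => vecMulVec_mem_M1 hψ
  have hdec : ∀ Q ∈ M1, ∃ ψ : Fin Nb → ℝ, ψ ⬝ᵥ ψ = 1 ∧ Q = vecMulVec ψ ψ :=
    fun Q hQ => rank_one_of_proj Q hQ.1 hQ.2.1 hQ.2.2
  -- basic structure of h
  have hsymm : ∀ i j, h i j = h j i := hmat_symm Nb V δ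
  have hoff : ∀ i j, i ≠ j → h i j ≤ 0 := hmat_offdiag_nonpos Nb V hδpos
  have habs4 : ∀ x : Fin Nb → ℝ, ∑ i, (|x i|)^4 = ∑ i, (x i)^4 :=
    fun x => Finset.sum_congr rfl fun i _ => by
      rw [show (|x i|)^4 = ((|x i|)^2)^2 by ring, sq_abs]; ring
  have habsU : ∀ x : Fin Nb → ℝ, x ⬝ᵥ x = 1 → (fun i => |x i|) ⬝ᵥ (fun i => |x i|) = 1 := by
    intro x hx
    have : (fun i => |x i|) ⬝ᵥ (fun i => |x i|) = x ⬝ᵥ x :=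
      Finset.sum_congr rfl fun i _ => abs_mul_abs_self (x i)
    rw [this, hx]
  -- existence of a minimizer of f on the sphere
  have hfc : Continuous f :=
    (qf_continuous h).add (continuous_const.mul
      (continuous_finset_sum _ fun i _ => (continuous_apply i).pow 4))
  obtain ⟨φ0, hφ0U, hφ0min⟩ := exists_min_on_US hfc
  set φ1 : Fin Nb → ℝ := fun i => |φ0 i| with hφ1def
  have hφ1U : φ1 ⬝ᵥ φ1 = 1 := habsU φ0 hφ0U
  have hf1le : f φ1 ≤ f φ0 := by
    have h1 := abs_qf_le hoff φ0
    have h2 : (∑ i, (φ1 i)^4) = ∑ i, (φ0 i)^4 := habs4 φ0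
    show φ1 ⬝ᵥ h *ᵥ φ1 + K * ∑ i, (φ1 i)^4 ≤ φ0 ⬝ᵥ h *ᵥ φ0 + K * ∑ i, (φ0 i)^4
    rw [h2]
    exact add_le_add_left h1 _
  have hφ1min : ∀ y ∈ US (Fin Nb), f φ1 ≤ f y :=
    fun y hy => le_trans hf1le (hφ0min y hy)
  -- Euler-Lagrange for φ1
  have hEL := quartic_EL hsymm K hφ1U (fun y hy => hφ1min y hy)
  set ε1 : ℝ := φ1 ⬝ᵥ ((h *ᵥ φ1) + (2*K) • fun i => (φ1 i)^3) with hε1def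
  -- the mean-field matrix identity
  have mkH : ∀ x : Fin Nb → ℝ,
      (h + Matrix.diagonal (fun i => α * δ⁻¹ * (x i * x i))) *ᵥ x
        = h *ᵥ x + (2*K) • (fun i => (x i)^3) := by
    intro x
    rw [Matrix.add_mulVec]
    congr 1
    funext i
    rw [Matrix.mulVec_diagonal]
    simp only [Pi.smul_apply, smul_eq_mul]
    rw [← hKval]
    ring
  have hHφ1 : (h + Matrix.diagonal (fun i => α * δ⁻¹ * (φ1 i * φ1 i))) *ᵥ φ1
      = ε1 • φ1 := by
    rw [mkH φ1]
    exact hEL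
  -- strict positivity of φ1
  have hφ1nonneg : ∀ i, 0 ≤ φ1 i := fun i => abs_nonneg _
  have hφ1ne0 : φ1 ≠ 0 := by
    intro hc
    rw [hc] at hφ1U
    simp [dotProduct] at hφ1U
  have hφ1pos : ∀ i, 0 < φ1 i := by
    intro i
    rcases (hφ1nonneg i).lt_or_eq with hlt | heq
    · exact hlt
    · exfalso
      exact hφ1ne0 (eig_nonneg_zero hNb V hδpos _ hφ1nonneg hHφ1 heq.symm)
  -- the Rayleigh minimizer of the mean-field matrix
  set H : Matrix (Fin Nb) (Fin Nb) ℝ :=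
    h + Matrix.diagonal (fun i => α * δ⁻¹ * (φ1 i * φ1 i)) with hHdef
  have hHsym : ∀ i j, H i j = H j i := by
    intro i j
    rw [hHdef, Matrix.add_apply, Matrix.add_apply, hsymm i j]
    by_cases hij : i = j
    · subst hij; rfl
    · rw [Matrix.diagonal_apply_ne _ hij, Matrix.diagonal_apply_ne _ (Ne.symm hij)]
  have hHoff : ∀ i j, i ≠ j → H i j ≤ 0 := by
    intro i j hij
    rw [hHdef, Matrix.add_apply, Matrix.diagonal_apply_ne _ hij, add_zero]
    exact hoff i j hij
  obtain ⟨u, huU, humin⟩ := exists_min_on_US (qf_continuous H)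
  set μ0 : ℝ := u ⬝ᵥ H *ᵥ u with hμ0def
  set u1 : Fin Nb → ℝ := fun i => |u i| with hu1def
  have hu1U : u1 ⬝ᵥ u1 = 1 := habsU u huU
  have hu1min : ∀ y ∈ US (Fin Nb), u1 ⬝ᵥ H *ᵥ u1 ≤ y ⬝ᵥ H *ᵥ y :=
    fun y hy => le_trans (abs_qf_le hHoff u) (humin y hy)
  have hu1qf : u1 ⬝ᵥ H *ᵥ u1 = μ0 :=
    le_antisymm (abs_qf_le hHoff u) (humin u1 hu1U)
  have heigu1 : H *ᵥ u1 = μ0 • u1 := by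
    rw [rayleigh_eigen hHsym hu1U hu1min, hu1qf]
  have hu1ne0 : u1 ≠ 0 := by
    intro hc
    rw [hc] at hu1U
    simp [dotProduct] at hu1U
  have hu1pos : ∀ i, 0 < u1 i := by
    intro i
    rcases (abs_nonneg (u i)).lt_or_eq with hlt | heq
    · exact hlt
    · exact absurd (eig_nonneg_zero hNb V hδpos _ (fun l => abs_nonneg (u l))
        heigu1 heq.symm) hu1ne0
  have hε1μ0 : ε1 = μ0 := by
    have hdot1 : φ1 ⬝ᵥ (H *ᵥ u1) = μ0 * (φ1 ⬝ᵥ u1) := by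
      rw [heigu1, dotProduct_smul, smul_eq_mul]
    have hdot2 : φ1 ⬝ᵥ (H *ᵥ u1) = ε1 * (φ1 ⬝ᵥ u1) := by
      rw [qf_symm hHsym φ1 u1, hHφ1, dotProduct_smul, smul_eq_mul, dotProduct_comm]
    have hper : 0 < φ1 ⬝ᵥ u1 :=
      Finset.sum_pos (fun i _ => mul_pos (hφ1pos i) (hu1pos i)) Finset.univ_nonempty
    have := hdot2.symm.trans hdot1
    exact mul_right_cancel₀ hper.ne' this
  -- assemble
  refine ⟨vecMulVec φ1 φ1, hmem φ1 hφ1U, ?_, ?_, φ1, hφ1U, hφ1pos, rfl, ε1, hHφ1, ?_, ?_⟩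
  · -- minimality
    intro Q hQ
    obtain ⟨ψ, hψU, rfl⟩ := hdec Q hQ
    rw [hEvv, hEvv]
    exact hφ1min ψ hψU
  · -- uniqueness
    intro Q hQ hQmin
    obtain ⟨ψ, hψU, hQψ⟩ := hdec Q hQ
    have hψmin : ∀ y ∈ US (Fin Nb), f ψ ≤ f y := by
      intro y hy
      have := hQmin (vecMulVec y y) (hmem y hy)
      rw [hQψ, hEvv, hEvv] at this
      exact this
    set ρ : Fin Nb → ℝ := fun i => |ψ i| with hρdef
    have hρU : ρ ⬝ᵥ ρ = 1 := habsU ψ hψU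
    have hρle : f ρ ≤ f ψ := by
      show ρ ⬝ᵥ h *ᵥ ρ + K * ∑ i, (ρ i)^4 ≤ ψ ⬝ᵥ h *ᵥ ψ + K * ∑ i, (ψ i)^4
      rw [habs4 ψ]
      exact add_le_add_left (abs_qf_le hoff ψ) _
    have hρmin : ∀ y ∈ US (Fin Nb), f ρ ≤ f y :=
      fun y hy => le_trans hρle (hψmin y hy)
    have hELρ := quartic_EL hsymm K hρU (fun y hy => hρmin y hy)
    have hHρ : (h + Matrix.diagonal (fun i => α * δ⁻¹ * (ρ i * ρ i))) *ᵥ ρ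
        = (ρ ⬝ᵥ ((h *ᵥ ρ) + (2*K) • fun i => (ρ i)^3)) • ρ := by
      rw [mkH ρ]
      exact hELρ
    have hρne0 : ρ ≠ 0 := by
      intro hc
      rw [hc] at hρU
      simp [dotProduct] at hρU
    have hρpos : ∀ i, 0 < ρ i := by
      intro i
      rcases (abs_nonneg (ψ i)).lt_or_eq with hlt | heq
      · exact hlt
      · exact absurd (eig_nonneg_zero hNb V hδpos _ (fun l => abs_nonneg (ψ l))
          hHρ heq.symm) hρne0
    have hψne : ∀ i, ψ i ≠ 0 := fun i => by
      intro hc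
      have := hρpos i
      rw [hρdef] at this
      simp only [hc, abs_zero] at this
      exact lt_irrefl 0 this
    -- equality of quadratic parts forces sign coherence
    have hfeq : f ρ = f ψ := le_antisymm hρle (hψmin ρ hρU)
    have hqeq : ρ ⬝ᵥ h *ᵥ ρ = ψ ⬝ᵥ h *ᵥ ψ := by
      have : ρ ⬝ᵥ h *ᵥ ρ + K * ∑ i, (ρ i)^4 = ψ ⬝ᵥ h *ᵥ ψ + K * ∑ i, (ψ i)^4 := hfeq
      rw [habs4 ψ] at this
      linarith
    have hterms := abs_qf_eq_terms hoff ψ hqeq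
    have hpair : ∀ k : ℕ, 0 < ψ (idx Nb hNb0 k) * ψ (idx Nb hNb0 (k+1)) := by
      intro k
      set p : Fin Nb := idx Nb hNb0 k
      set q : Fin Nb := idx Nb hNb0 (k+1)
      have hpq : h p q = -(1/(2*δ^2)) := hmat_succ hNb hNb0 V δ k
      have ht := hterms p q
      rw [hpq] at ht
      have habs : |ψ p| * |ψ q| = ψ p * ψ q := by
        have hc0 : (0:ℝ) < 1/(2*δ^2) := by positivity
        nlinarith [ht]
      have : 0 < |ψ p| * |ψ q| :=
        mul_pos (abs_pos.mpr (hψne p)) (abs_pos.mpr (hψne q))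
      linarith [habs ▸ this]
    have hchain : ∀ k : ℕ, 0 < ψ (idx Nb hNb0 k) * ψ (idx Nb hNb0 0) := by
      intro k
      induction k with
      | zero => exact mul_self_pos.mpr (hψne _)
      | succ k ih =>
        have hpk := hpair k
        by_contra hle
        push_neg at hle
        have h1 : 0 < (ψ (idx Nb hNb0 k) * ψ (idx Nb hNb0 (k+1)))
            * (ψ (idx Nb hNb0 k) * ψ (idx Nb hNb0 0)) := mul_pos hpk ih
        nlinarith [mul_self_nonneg (ψ (idx Nb hNb0 k))]
    have hallpos : ∀ i j : Fin Nb, 0 < ψ i * ψ j := by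
      intro i j
      have hi := hchain i.val
      have hj := hchain j.val
      rw [idx_self Nb hNb0 i] at hi
      rw [idx_self Nb hNb0 j] at hj
      by_contra hle
      push_neg at hle
      have h1 : 0 < (ψ i * ψ (idx Nb hNb0 0)) * (ψ j * ψ (idx Nb hNb0 0)) :=
        mul_pos hi hj
      nlinarith [mul_self_nonneg (ψ (idx Nb hNb0 0))]
    have hQρ : Q = vecMulVec ρ ρ := by
      rw [hQψ]
      ext i j
      rw [vecMulVec_apply, vecMulVec_apply, hρdef]
      show ψ i * ψ j = |ψ i| * |ψ j|
      rw [← abs_mul, abs_of_pos (hallpos i j)]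
    have hρφ1 : ρ = φ1 :=
      pos_min_unique hNb V hδpos hK hφ1U hρU hφ1pos hρpos
        (fun y hy => hφ1min y hy) (fun y hy => hρmin y hy)
    rw [hQρ, hρφ1]
  · -- lowest eigenvalue
    intro μ v hv hveig
    have hvv := dot_self_pos hv
    have h1 := rayleigh_lower huU humin v
    have h2 : v ⬝ᵥ H *ᵥ v = μ * (v ⬝ᵥ v) := by
      rw [show H *ᵥ v = μ • v from hveig, dotProduct_smul, smul_eq_mul]
    rw [h2, ← hμ0def] at h1
    rw [hε1μ0]
    exact le_of_mul_le_mul_right (by linarith [h1]) hvv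
  · -- simplicity
    intro v hveig
    have hveig' : H *ᵥ v = ε1 • v := hveig
    set c : ℝ := v ⬝ᵥ φ1 with hcdef
    set w : Fin Nb → ℝ := v - c • φ1 with hwdef
    have hHw : H *ᵥ w = ε1 • w := by
      rw [hwdef, Matrix.mulVec_sub, Matrix.mulVec_smul, hveig', hHφ1, smul_sub,
        smul_comm]
    have hwφ : w ⬝ᵥ φ1 = 0 := by
      rw [hwdef, sub_dotProduct, smul_dotProduct, hφ1U, smul_eq_mul, mul_one, hcdef,
        sub_self]
    by_cases hw0 : w = 0
    · refine ⟨c, ?_⟩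
      have := sub_eq_zero.mp (hwdef ▸ hw0)
      exact this
    · exfalso
      have hww := dot_self_pos hw0
      set aw : Fin Nb → ℝ := fun i => |w i| with hawdef
      have hawdot : aw ⬝ᵥ aw = w ⬝ᵥ w :=
        Finset.sum_congr rfl fun i _ => abs_mul_abs_self (w i)
      have hawne : aw ≠ 0 := by
        intro hc
        rw [hc] at hawdot
        have : w ⬝ᵥ w = 0 := by rw [← hawdot]; simp
        exact hww.ne' this
      set t : ℝ := (Real.sqrt (aw ⬝ᵥ aw))⁻¹ with htdef
      have htpos : 0 < t := by
        rw [htdef]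
        have : 0 < Real.sqrt (aw ⬝ᵥ aw) := Real.sqrt_pos.mpr (by rw [hawdot]; exact hww)
        positivity
      set z : Fin Nb → ℝ := t • aw with hzdef
      have hzUS : z ∈ US (Fin Nb) := US_smul_mem hawne
      have ht2 : t^2 = (w ⬝ᵥ w)⁻¹ := by
        rw [htdef, ← Real.sqrt_inv, Real.sq_sqrt (inv_nonneg.mpr (dot_self_nonneg aw)),
          hawdot]
      have hqfw : w ⬝ᵥ H *ᵥ w = ε1 * (w ⬝ᵥ w) := by
        rw [hHw, dotProduct_smul, smul_eq_mul]
      have hzqf : z ⬝ᵥ H *ᵥ z = (w ⬝ᵥ w)⁻¹ * (aw ⬝ᵥ H *ᵥ aw) := by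
        rw [hzdef, qf_smul, ht2]
      have hz_le : z ⬝ᵥ H *ᵥ z ≤ μ0 := by
        rw [hzqf]
        have h3 : aw ⬝ᵥ H *ᵥ aw ≤ ε1 * (w ⬝ᵥ w) := (abs_qf_le hHoff w).trans hqfw.le
        have h4 := mul_le_mul_of_nonneg_left h3 (inv_nonneg.mpr hww.le)
        calc (w ⬝ᵥ w)⁻¹ * (aw ⬝ᵥ H *ᵥ aw) ≤ (w ⬝ᵥ w)⁻¹ * (ε1 * (w ⬝ᵥ w)) := h4
        _ = ε1 := by field_simp
        _ = μ0 := hε1μ0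
      have hzeq : z ⬝ᵥ H *ᵥ z = μ0 := le_antisymm hz_le (humin z hzUS)
      have hzmin : ∀ y ∈ US (Fin Nb), z ⬝ᵥ H *ᵥ z ≤ y ⬝ᵥ H *ᵥ y := by
        intro y hy
        rw [hzeq]
        exact humin y hy
      have heigz : H *ᵥ z = μ0 • z := by
        rw [rayleigh_eigen hHsym hzUS hzmin, hzeq]
      have hzne0 : z ≠ 0 := by
        intro hc
        have : z ⬝ᵥ z = 1 := hzUS
        rw [hc] at this
        simp [dotProduct] at this
      have hznonneg : ∀ i, 0 ≤ z i := by
        intro i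
        have : z i = t * |w i| := rfl
        rw [this]
        exact mul_nonneg htpos.le (abs_nonneg _)
      have hzpos : ∀ i, 0 < z i := by
        intro i
        rcases (hznonneg i).lt_or_eq with hlt | heq
        · exact hlt
        · exact absurd (eig_nonneg_zero hNb V hδpos _ hznonneg heigz heq.symm) hzne0
      have hwnz : ∀ i, w i ≠ 0 := by
        intro i hci
        have := hzpos i
        have hzi : z i = t * |w i| := rfl
        rw [hzi, hci, abs_zero, mul_zero] at this
        exact lt_irrefl 0 this
      have heigaw : H *ᵥ aw = μ0 • aw := by
        have h5 : H *ᵥ (t • aw) = t • (H *ᵥ aw) := Matrix.mulVec_smul H t aw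
        have h6 : t • (H *ᵥ aw) = t • (μ0 • aw) := by
          rw [← h5, ← hzdef, heigz, hzdef, smul_comm]
        exact smul_right_injective _ htpos.ne' h6
      -- w must change sign
      have hsum0 : ∑ i, w i * φ1 i = 0 := hwφ
      have hex_pos : ∃ i, 0 < w i := by
        by_contra hcp
        push_neg at hcp
        have : ∑ i, w i * φ1 i < 0 :=
          Finset.sum_neg (fun i _ => mul_neg_of_neg_of_pos
            (lt_of_le_of_ne (hcp i) (hwnz i)) (hφ1pos i)) Finset.univ_nonempty
        linarith
      have hex_neg : ∃ j, w j < 0 := by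
        by_contra hcn
        push_neg at hcn
        have : 0 < ∑ i, w i * φ1 i :=
          Finset.sum_pos (fun i _ => mul_pos
            (lt_of_le_of_ne (hcn i) (Ne.symm (hwnz i))) (hφ1pos i)) Finset.univ_nonempty
        linarith
      obtain ⟨i, hi⟩ := hex_pos
      obtain ⟨j, hj⟩ := hex_neg
      set up : Fin Nb → ℝ := aw + w with hupdef
      have heigup : H *ᵥ up = ε1 • up := by
        rw [hupdef, Matrix.mulVec_add, heigaw, hHw, ← hε1μ0, smul_add]
      have hupnonneg : ∀ l, 0 ≤ up l := by
        intro l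
        have : up l = |w l| + w l := rfl
        rw [this]
        linarith [neg_abs_le (w l), abs_nonneg (w l)]
      have hupj : up j = 0 := by
        have : up j = |w j| + w j := rfl
        rw [this, abs_of_neg hj]
        ring
      have hup0 := eig_nonneg_zero hNb V hδpos _ hupnonneg heigup hupj
      have : up i = 0 := by rw [hup0]; rfl
      have hupi : up i = |w i| + w i := rfl
      rw [hupi, abs_of_pos hi] at this
      linarith
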